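/- arXiv:1604.05229 — 2 statements merged into one kernel-verified Lean document; each statement's English description precedes it below -/
import Mathlib

section
/- Let $M_0 \in (0,1/4)$, $\rho_0 > 0$, $u_0' \in \mathbb{R}$, and set $\lambda_i$ as the roots of $\lambda^2 + \lambda + M_0$, $\sqrt{\Xi} = \sqrt{1-4M_0}$, $A = (\lambda_1 u_0' - M_0 + 2\rho_0)/\sqrt{\Xi}$ and $B = (M_0 - 2\rho_0 - \lambda_2 u_0')/\sqrt{\Xi}$. Define $g(t) = 2\rho_0/M_0 + (A/\lambda_1)e^{\lambda_1 t} + (B/\lambda_2)e^{\lambda_2 t}$, so $g(0) = 1$. Then $\inf_{t \geq 0} g(t) \leq 0$ if and only if $u_0' < 0$, $M_0 - 2\rho_0 < \lambda_1 u_0'$, and $2\rho_0 \leq (\lambda_1 u_0' - M_0 + 2\rho_0)^{-\lambda_2/\sqrt{\Xi}}(\lambda_2 u_0' - M_0 + 2\rho_0)^{\lambda_1/\sqrt{\Xi}}$. -/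
open Real

set_option maxHeartbeats 1000000 in
/-- Sharp critical threshold, Case A (`1 - 4M₀ > 0`). -/
theorem stmt6 (M0 rho0 u0' lam1 lam2 A B : ℝ) (g : ℝ → ℝ)
    (hM0 : M0 ∈ Set.Ioo (0 : ℝ) (1 / 4)) (hrho0 : 0 < rho0)
    (hlam1 : lam1 = (-1 + Real.sqrt (1 - 4 * M0)) / 2)
    (hlam2 : lam2 = (-1 - Real.sqrt (1 - 4 * M0)) / 2)
    (hA : A = (lam1 * u0' - M0 + 2 * rho0) / Real.sqrt (1 - 4 * M0))
    (hB : B = (M0 - 2 * rho0 - lam2 * u0') / Real.sqrt (1 - 4 * M0))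
    (hg : g = fun t => 2 * rho0 / M0 + (A / lam1) * Real.exp (lam1 * t)
      + (B / lam2) * Real.exp (lam2 * t)) :
    sInf (g '' Set.Ici (0 : ℝ)) ≤ 0 ↔
      (u0' < 0 ∧ M0 - 2 * rho0 < lam1 * u0' ∧
        2 * rho0 ≤ (lam1 * u0' - M0 + 2 * rho0) ^ (-lam2 / Real.sqrt (1 - 4 * M0))
          * (lam2 * u0' - M0 + 2 * rho0) ^ (lam1 / Real.sqrt (1 - 4 * M0))) := by
  obtain ⟨hM0pos, hM0lt⟩ := hM0
  have hXi : (0:ℝ) < 1 - 4 * M0 := by linarith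
  set s : ℝ := Real.sqrt (1 - 4 * M0) with hsdef
  have hspos : 0 < s := Real.sqrt_pos.mpr hXi
  have hsne : s ≠ 0 := hspos.ne'
  have hs2 : s ^ 2 = 1 - 4 * M0 := Real.sq_sqrt hXi.le
  have hslt1 : s < 1 := by nlinarith [sq_nonneg (s - 1)]
  have hl1neg : lam1 < 0 := by rw [hlam1]; linarith
  have hl2neg : lam2 < 0 := by rw [hlam2]; linarith
  have hl1ne : lam1 ≠ 0 := ne_of_lt hl1neg
  have hl2ne : lam2 ≠ 0 := ne_of_lt hl2neg
  have hM0ne : M0 ≠ 0 := hM0pos.ne'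
  have hM0eq : lam1 * lam2 = M0 := by
    rw [hlam1, hlam2]; linear_combination (-1/4 : ℝ) * hs2
  have hsub : lam1 - lam2 = s := by rw [hlam1, hlam2]; ring
  have hsA : s * A = lam1 * u0' - M0 + 2 * rho0 := by
    rw [hA]; field_simp
  have hsB : s * B = M0 - 2 * rho0 - lam2 * u0' := by
    rw [hB]; field_simp
  have hABu : A + B = u0' := by
    have h : s * (A + B) = s * u0' := by
      linear_combination hsA + hsB + u0' * hsub
    exact mul_left_cancel₀ hsne h
  have hkey : lam2 * A + lam1 * B = M0 - 2 * rho0 := by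
    have h : s * (lam2 * A + lam1 * B) = s * (M0 - 2 * rho0) := by
      linear_combination lam2 * hsA + lam1 * hsB + (M0 - 2 * rho0) * hsub
    exact mul_left_cancel₀ hsne h
  set a : ℝ := A / lam1 with hadef
  set b : ℝ := B / lam2 with hbdef
  have hab1 : 2 * rho0 / M0 + a + b = 1 := by
    rw [hadef, hbdef]
    field_simp
    linear_combination (2 * rho0 - M0) * hM0eq + M0 * hkey
  have hgt : ∀ t, g t = 2 * rho0 / M0 + a * Real.exp (lam1 * t) + b * Real.exp (lam2 * t) := by
    intro t; rw [hg]
  have hCpos : 0 < 2 * rho0 / M0 := by positivity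
  have hl2l1 : lam2 < lam1 := by rw [hlam1, hlam2]; linarith
  have hexp1 : ∀ t : ℝ, 0 ≤ t → Real.exp (lam1 * t) ≤ 1 := by
    intro t ht
    rw [Real.exp_le_one_iff]
    exact mul_nonpos_iff.mpr (Or.inr ⟨hl1neg.le, ht⟩)
  have hexp2 : ∀ t : ℝ, 0 ≤ t → Real.exp (lam2 * t) ≤ 1 := by
    intro t ht
    rw [Real.exp_le_one_iff]
    exact mul_nonpos_iff.mpr (Or.inr ⟨hl2neg.le, ht⟩)
  have hexp21 : ∀ t : ℝ, 0 ≤ t → Real.exp (lam2 * t) ≤ Real.exp (lam1 * t) := by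
    intro t ht
    rw [Real.exp_le_exp]
    have := mul_nonneg (show (0:ℝ) ≤ lam1 - lam2 by linarith) ht
    linarith
  have hBern : ∀ d : ℝ, 1 + lam2 / lam1 * (Real.exp (lam1 * d) - 1) ≤ Real.exp (lam2 * d) := by
    intro d
    have hk : 1 ≤ lam2 / lam1 := by
      rw [le_div_iff_of_neg hl1neg]; linarith
    have hx : (-1:ℝ) ≤ Real.exp (lam1 * d) - 1 := by nlinarith [Real.exp_pos (lam1 * d)]
    have h := one_add_mul_self_le_rpow_one_add hx hk
    rwa [show (1 : ℝ) + (Real.exp (lam1 * d) - 1) = Real.exp (lam1 * d) by ring,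
      ← Real.exp_mul, show lam1 * d * (lam2 / lam1) = lam2 * d by field_simp] at h
  -- bounded below & nonempty
  have hbdd : BddBelow (g '' Set.Ici (0:ℝ)) := by
    refine ⟨2 * rho0 / M0 - |a| - |b|, ?_⟩
    rintro x ⟨t, ht, rfl⟩
    rw [hgt]
    have ht' : (0:ℝ) ≤ t := ht
    have p1 : 0 ≤ (a + |a|) * Real.exp (lam1 * t) :=
      mul_nonneg (by linarith [neg_abs_le a]) (Real.exp_pos _).le
    have p2 : |a| * Real.exp (lam1 * t) ≤ |a| :=
      mul_le_of_le_one_right (abs_nonneg a) (hexp1 t ht')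
    have q1 : 0 ≤ (b + |b|) * Real.exp (lam2 * t) :=
      mul_nonneg (by linarith [neg_abs_le b]) (Real.exp_pos _).le
    have q2 : |b| * Real.exp (lam2 * t) ≤ |b| :=
      mul_le_of_le_one_right (abs_nonneg b) (hexp2 t ht')
    linarith [p1, p2, q1, q2]
  have hne : (g '' Set.Ici (0:ℝ)).Nonempty := ⟨g 0, 0, Set.self_mem_Ici, rfl⟩
  have hAiff : (M0 - 2 * rho0 < lam1 * u0') ↔ 0 < A := by
    constructor
    · intro h
      by_contra h'
      push_neg at h'
      nlinarith [mul_nonpos_of_nonneg_of_nonpos hspos.le h', hsA]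
    · intro h; nlinarith [hsA, mul_pos hspos h]
  -- the key minimizer construction
  have hmain : 0 < A → B < 0 → u0' < 0 →
      ∃ t0, 0 ≤ t0 ∧
        g t0 = 2 * rho0 / M0 - s / M0 * (A ^ (-lam2 / s) * (-B) ^ (lam1 / s)) ∧
        ∀ t, g t0 ≤ g t := by
    intro hApos hBneg hu0
    have hnBpos : 0 < -B := by linarith
    set r : ℝ := -B / A with hrdef
    have hrpos : 0 < r := by positivity
    have hr1 : 1 < r := by
      rw [hrdef, lt_div_iff₀ hApos]; linarith [hABu]
    set t0 : ℝ := Real.log r / s with ht0def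
    have ht0 : 0 ≤ t0 := div_nonneg (Real.log_nonneg hr1.le) hspos.le
    have hU1 : Real.exp (lam1 * t0) = r ^ (lam1 / s) := by
      rw [Real.rpow_def_of_pos hrpos, ht0def]; congr 1; field_simp
    have hU2 : Real.exp (lam2 * t0) = r ^ (lam2 / s) := by
      rw [Real.rpow_def_of_pos hrpos, ht0def]; congr 1; field_simp
    set P : ℝ := A ^ (-lam2 / s) * (-B) ^ (lam1 / s) with hPdef
    have hPpos : 0 < P :=
      mul_pos (Real.rpow_pos_of_pos hApos _) (Real.rpow_pos_of_pos hnBpos _)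
    have hApowne : A ^ (lam1 / s) ≠ 0 := (Real.rpow_pos_of_pos hApos _).ne'
    have hApowne2 : A ^ (lam2 / s) ≠ 0 := (Real.rpow_pos_of_pos hApos _).ne'
    have hnBpowne : (-B) ^ (lam2 / s) ≠ 0 := (Real.rpow_pos_of_pos hnBpos _).ne'
    have hnBpowne1 : (-B) ^ (lam1 / s) ≠ 0 := (Real.rpow_pos_of_pos hnBpos _).ne'
    have he1 : -lam2 / s = 1 - lam1 / s := by field_simp; linear_combination hsub
    have he2 : lam1 / s = 1 + lam2 / s := by field_simp; linear_combination hsub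
    have hApow : A ^ (-lam2 / s) = A / A ^ (lam1 / s) := by
      rw [he1, Real.rpow_sub hApos, Real.rpow_one]
    have hBpow : (-B) ^ (lam1 / s) = (-B) * (-B) ^ (lam2 / s) := by
      rw [he2, Real.rpow_add hnBpos, Real.rpow_one]
    have hApow2 : A ^ (-lam2 / s) = (A ^ (lam2 / s))⁻¹ := by
      rw [neg_div, Real.rpow_neg hApos.le]
    have hterm1 : a * r ^ (lam1 / s) = P / lam1 := by
      rw [hadef, hrdef, Real.div_rpow hnBpos.le hApos.le, hPdef, hApow]
      field_simp
    have hterm2 : b * r ^ (lam2 / s) = -(P / lam2) := by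
      rw [hbdef, hrdef, Real.div_rpow hnBpos.le hApos.le, hPdef, hBpow, hApow2]
      field_simp
    have hfrac : P / lam1 + -(P / lam2) = -(s / M0 * P) := by
      have h' : P / lam1 + -(P / lam2) = P * (lam2 - lam1) / (lam1 * lam2) := by
        field_simp; ring
      rw [h', hM0eq, show lam2 - lam1 = -s by linarith]
      ring
    have hgstar : g t0 = 2 * rho0 / M0 - s / M0 * P := by
      rw [hgt t0, hU1, hU2, hterm1, hterm2]
      linarith [hfrac]
    refine ⟨t0, ht0, hgstar, ?_⟩
    intro t
    have hbpos : 0 < b := by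
      rw [hbdef]; exact div_pos_iff.mpr (Or.inr ⟨hBneg, hl2neg⟩)
    have hE1 : Real.exp (lam1 * t) = Real.exp (lam1 * t0) * Real.exp (lam1 * (t - t0)) := by
      rw [← Real.exp_add]; congr 1; ring
    have hE2 : Real.exp (lam2 * t) = Real.exp (lam2 * t0) * Real.exp (lam2 * (t - t0)) := by
      rw [← Real.exp_add]; congr 1; ring
    have hcrit : a * Real.exp (lam1 * t0) + lam2 / lam1 * (b * Real.exp (lam2 * t0)) = 0 := by
      rw [hU1, hU2, hterm1, hterm2]
      field_simp
      ring
    have hBd := hBern (t - t0)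
    have h1 : b * Real.exp (lam2 * t0) * (1 + lam2 / lam1 * (Real.exp (lam1 * (t - t0)) - 1))
        ≤ b * Real.exp (lam2 * t0) * Real.exp (lam2 * (t - t0)) :=
      mul_le_mul_of_nonneg_left hBd (mul_pos hbpos (Real.exp_pos _)).le
    have h2 : (Real.exp (lam1 * (t - t0)) - 1) *
        (a * Real.exp (lam1 * t0) + lam2 / lam1 * (b * Real.exp (lam2 * t0))) = 0 := by
      rw [hcrit]; ring
    rw [hgt t, hgt t0, hE1, hE2]
    linarith [h1, h2]
  have hthr_eq : 0 < A → B < 0 →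
      (lam1 * u0' - M0 + 2 * rho0) ^ (-lam2 / s) * (lam2 * u0' - M0 + 2 * rho0) ^ (lam1 / s)
        = s * (A ^ (-lam2 / s) * (-B) ^ (lam1 / s)) := by
    intro hApos hBneg
    have h2 : lam2 * u0' - M0 + 2 * rho0 = s * (-B) := by linarith [hsB]
    rw [← hsA, h2, Real.mul_rpow hspos.le hApos.le,
      Real.mul_rpow hspos.le (by linarith : (0:ℝ) ≤ -B)]
    have hss : s ^ (-lam2 / s) * s ^ (lam1 / s) = s := by
      rw [← Real.rpow_add hspos, show -lam2 / s + lam1 / s = 1 by field_simp; linear_combination hsub,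
        Real.rpow_one]
    rw [mul_mul_mul_comm, hss]
  -- lower bound when RHS fails
  have hlow : ¬(u0' < 0 ∧ M0 - 2 * rho0 < lam1 * u0' ∧
      2 * rho0 ≤ (lam1 * u0' - M0 + 2 * rho0) ^ (-lam2 / s)
        * (lam2 * u0' - M0 + 2 * rho0) ^ (lam1 / s)) →
      ∃ ε, 0 < ε ∧ ∀ t : ℝ, 0 ≤ t → ε ≤ g t := by
    intro hnot
    rcases le_or_gt A 0 with hA0 | hA0
    · rcases le_or_gt B 0 with hB0 | hB0
      · -- A ≤ 0, B ≤ 0: g ≥ C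
        refine ⟨2 * rho0 / M0, hCpos, fun t ht => ?_⟩
        rw [hgt]
        have ha : 0 ≤ a := by
          rw [hadef]; exact div_nonneg_iff.mpr (Or.inr ⟨hA0, hl1neg.le⟩)
        have hb : 0 ≤ b := by
          rw [hbdef]; exact div_nonneg_iff.mpr (Or.inr ⟨hB0, hl2neg.le⟩)
        linarith [mul_nonneg ha (Real.exp_pos (lam1 * t)).le,
          mul_nonneg hb (Real.exp_pos (lam2 * t)).le]
      · -- A ≤ 0, B > 0: g ≥ min C 1
        refine ⟨min (2 * rho0 / M0) 1, lt_min hCpos one_pos, fun t ht => ?_⟩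
        rw [hgt]
        have ha : 0 ≤ a := by
          rw [hadef]; exact div_nonneg_iff.mpr (Or.inr ⟨hA0, hl1neg.le⟩)
        have key : a * Real.exp (lam2 * t) ≤ a * Real.exp (lam1 * t) :=
          mul_le_mul_of_nonneg_left (hexp21 t ht) ha
        rcases le_or_gt 0 (a + b) with hab | hab
        · linarith [key, mul_nonneg hab (Real.exp_pos (lam2 * t)).le,
            min_le_left (2 * rho0 / M0) (1:ℝ)]
        · have hh : 0 ≤ (-(a + b)) * (1 - Real.exp (lam2 * t)) :=
            mul_nonneg (by linarith) (by linarith [hexp2 t ht])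
          linarith [key, hh, min_le_right (2 * rho0 / M0) (1:ℝ), hab1]
    · rcases le_or_gt 0 B with hB0 | hB0
      · -- A > 0, B ≥ 0: g ≥ 1
        refine ⟨1, one_pos, fun t ht => ?_⟩
        rw [hgt]
        have ha : a ≤ 0 := by
          rw [hadef]; exact div_nonpos_iff.mpr (Or.inl ⟨hA0.le, hl1neg.le⟩)
        have hb : b ≤ 0 := by
          rw [hbdef]; exact div_nonpos_iff.mpr (Or.inl ⟨hB0, hl2neg.le⟩)
        have t1 : 0 ≤ (-a) * (1 - Real.exp (lam1 * t)) :=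
          mul_nonneg (by linarith) (by linarith [hexp1 t ht])
        have t2 : 0 ≤ (-b) * (1 - Real.exp (lam2 * t)) :=
          mul_nonneg (by linarith) (by linarith [hexp2 t ht])
        linarith [t1, t2, hab1]
      · -- A > 0, B < 0
        rcases le_or_gt 0 u0' with hu | hu
        · -- u0' ≥ 0: g ≥ 1 via Bernoulli
          refine ⟨1, one_pos, fun t ht => ?_⟩
          rw [hgt]
          have hbpos : 0 < b := by
            rw [hbdef]; exact div_pos_iff.mpr (Or.inr ⟨hB0, hl2neg⟩)
          have h1 : b * (1 + lam2 / lam1 * (Real.exp (lam1 * t) - 1))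
              ≤ b * Real.exp (lam2 * t) :=
            mul_le_mul_of_nonneg_left (hBern t) hbpos.le
          have hk : a + lam2 / lam1 * b = u0' / lam1 := by
            rw [hadef, hbdef, div_mul_div_comm, mul_comm lam1 lam2,
              mul_div_mul_left _ _ hl2ne, ← add_div, hABu]
          have hk' : (a + lam2 / lam1 * b) * Real.exp (lam1 * t)
              = u0' / lam1 * Real.exp (lam1 * t) := by rw [hk]
          have hu1 : u0' / lam1 ≤ 0 :=
            div_nonpos_iff.mpr (Or.inl ⟨hu, hl1neg.le⟩)
          have h2 : 0 ≤ (-(u0' / lam1)) * (1 - Real.exp (lam1 * t)) :=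
            mul_nonneg (by linarith) (by linarith [hexp1 t ht])
          linarith [h1, h2, hab1, hk, hk']
        · -- u0' < 0, A > 0, B < 0, threshold fails
          have hAp : M0 - 2 * rho0 < lam1 * u0' := hAiff.mpr hA0
          have hthr : ¬(2 * rho0 ≤ (lam1 * u0' - M0 + 2 * rho0) ^ (-lam2 / s)
              * (lam2 * u0' - M0 + 2 * rho0) ^ (lam1 / s)) :=
            fun h => hnot ⟨hu, hAp, h⟩
          push_neg at hthr
          rw [hthr_eq hA0 hB0] at hthr
          obtain ⟨t0, ht0, hgt0, hlbt⟩ := hmain hA0 hB0 hu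
          refine ⟨g t0, ?_, fun t ht => hlbt t⟩
          rw [hgt0]
          have hPpos : 0 < A ^ (-lam2 / s) * (-B) ^ (lam1 / s) :=
            mul_pos (Real.rpow_pos_of_pos hA0 _) (Real.rpow_pos_of_pos (by linarith) _)
          have h4 : s * (A ^ (-lam2 / s) * (-B) ^ (lam1 / s)) * M0⁻¹ < 2 * rho0 * M0⁻¹ :=
            mul_lt_mul_of_pos_right hthr (inv_pos.mpr hM0pos)
          have : s / M0 * (A ^ (-lam2 / s) * (-B) ^ (lam1 / s))
              = s * (A ^ (-lam2 / s) * (-B) ^ (lam1 / s)) * M0⁻¹ := by ring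
          rw [this]
          have : 2 * rho0 / M0 = 2 * rho0 * M0⁻¹ := by ring
          rw [this]
          linarith
  constructor
  · intro hinf
    by_contra hnot
    obtain ⟨ε, hε, hlb⟩ := hlow hnot
    have hle : ε ≤ sInf (g '' Set.Ici (0:ℝ)) :=
      le_csInf hne (by rintro x ⟨t, ht, rfl⟩; exact hlb t ht)
    linarith
  · rintro ⟨h1, h2, h3⟩
    have hApos : 0 < A := hAiff.mp h2
    have hBneg : B < 0 := by linarith [hABu]
    obtain ⟨t0, ht0, hgt0, -⟩ := hmain hApos hBneg h1
    have hle : g t0 ≤ 0 := by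
      rw [hgt0]
      rw [hthr_eq hApos hBneg] at h3
      have h4 : 2 * rho0 * M0⁻¹ ≤ s * (A ^ (-lam2 / s) * (-B) ^ (lam1 / s)) * M0⁻¹ :=
        mul_le_mul_of_nonneg_right h3 (inv_pos.mpr hM0pos).le
      have e1 : s / M0 * (A ^ (-lam2 / s) * (-B) ^ (lam1 / s))
          = s * (A ^ (-lam2 / s) * (-B) ^ (lam1 / s)) * M0⁻¹ := by ring
      have e2 : 2 * rho0 / M0 = 2 * rho0 * M0⁻¹ := by ring
      rw [e1, e2]
      linarith
    exact le_trans (csInf_le hbdd ⟨t0, ht0, rfl⟩) hle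
end

section
/- Let $\rho_0 > 0$, $u_0' \in \mathbb{R}$, and set $C_3 = u_0'$, $C_4 = -u_0'/2 - 1/4 + 2\rho_0$. Define $g(t) = 8\rho_0 - (2C_3 + 4C_4)e^{-t/2} - 2C_4 t e^{-t/2}$ (so $g(0)=1$ when $M_0 = 1/4$). Then $\inf_{t \geq 0} g(t) \leq 0$ if and only if $u_0' < \min\{0, 4\rho_0 - 1/2\}$ and $\ln\big(8\rho_0/(8\rho_0 - 2u_0' - 1)\big) \leq 2u_0'/(8\rho_0 - 2u_0' - 1)$. -/
open Real

lemma aux_s_exp (s : ℝ) : s * Real.exp (-s/2) ≤ 2 * Real.exp (-1) := by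
  have h := Real.add_one_le_exp (s/2 - 1)
  have h1 : Real.exp (s/2 - 1) * Real.exp (-s/2) = Real.exp (-1 : ℝ) := by
    rw [← Real.exp_add]; ring_nf
  nlinarith [Real.exp_pos (-s/2), Real.exp_pos (s/2 - 1),
    mul_le_mul_of_nonneg_right h (Real.exp_pos (-s/2)).le]

lemma aux_key (b u t : ℝ) (hb : 0 < b) :
    Real.exp (-t/2) * ((2*b + 2*u) + b*t) ≤ 2*b*Real.exp (u/b) := by
  set s := t + (2*b + 2*u)/b with hs
  have h1 : s * Real.exp (-s/2) ≤ 2 * Real.exp (-1) := aux_s_exp s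
  have hbne : b ≠ 0 := ne_of_gt hb
  have hbs : b * s = b*t + (2*b+2*u) := by
    rw [hs, mul_add, mul_div_assoc', mul_div_cancel_left₀ _ hbne]
  have e1 : Real.exp (-t/2) = Real.exp (-s/2) * Real.exp ((2*b+2*u)/(2*b)) := by
    rw [← Real.exp_add]; congr 1; field_simp [hs]; linear_combination hbs
  have e2 : Real.exp ((2*b+2*u)/(2*b)) * Real.exp (-1 : ℝ) = Real.exp (u/b) := by
    rw [← Real.exp_add]; congr 1; field_simp; ring
  have e3 : (2*b + 2*u) + b*t = b * s := by field_simp [hs]; linear_combination -hbs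
  rw [e1, e3]
  calc Real.exp (-s/2) * Real.exp ((2*b+2*u)/(2*b)) * (b * s)
      = (s * Real.exp (-s/2)) * (b * Real.exp ((2*b+2*u)/(2*b))) := by ring
    _ ≤ (2 * Real.exp (-1)) * (b * Real.exp ((2*b+2*u)/(2*b))) := by
        apply mul_le_mul_of_nonneg_right h1; positivity
    _ = 2*b*Real.exp (u/b) := by rw [← e2]; ring

/-- Sharp critical threshold, Case B (`M₀ = 1/4`). -/
theorem stmt7 (rho0 u0' C3 C4 : ℝ) (g : ℝ → ℝ)
    (hrho0 : 0 < rho0)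
    (hC3 : C3 = u0') (hC4 : C4 = -u0' / 2 - 1 / 4 + 2 * rho0)
    (hg : g = fun t => 8 * rho0 - (2 * C3 + 4 * C4) * Real.exp (-t / 2)
      - 2 * C4 * t * Real.exp (-t / 2)) :
    sInf (g '' Set.Ici (0 : ℝ)) ≤ 0 ↔
      (u0' < min 0 (4 * rho0 - 1 / 2) ∧
        Real.log (8 * rho0 / (8 * rho0 - 2 * u0' - 1))
          ≤ 2 * u0' / (8 * rho0 - 2 * u0' - 1)) := by
  subst hC4 hg
  rw [hC3]
  obtain ⟨b, hbdef⟩ : ∃ b : ℝ, b = 4 * rho0 - u0' - 1/2 := ⟨_, rfl⟩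
  have hgt : ∀ t : ℝ, (fun t => 8 * rho0 - (2 * u0' + 4 * (-u0' / 2 - 1 / 4 + 2 * rho0)) * Real.exp (-t / 2)
      - 2 * (-u0' / 2 - 1 / 4 + 2 * rho0) * t * Real.exp (-t / 2)) t
      = 8 * rho0 - Real.exp (-t/2) * ((2*b + 2*u0') + b*t) := by
    intro t; simp only [hbdef]; ring
  have hne : (Set.Ici (0:ℝ)).Nonempty := ⟨0, Set.self_mem_Ici⟩
  have hD : 8 * rho0 - 2 * u0' - 1 = 2 * b := by rw [hbdef]; ring
  constructor
  · intro hinf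
    by_contra hcon
    -- produce a positive lower bound δ for g on Ici 0
    obtain ⟨δ, hδpos, hδlb⟩ :
        ∃ δ : ℝ, 0 < δ ∧ ∀ t : ℝ, 0 ≤ t →
          δ ≤ 8 * rho0 - Real.exp (-t/2) * ((2*b + 2*u0') + b*t) := by
      by_cases hlt : u0' < min 0 (4 * rho0 - 1 / 2)
      · -- then the log condition fails
        have hb : 0 < b := by
          have := (lt_min_iff.mp hlt).2; rw [hbdef]; linarith
        have h2 : 2 * u0' / (8 * rho0 - 2 * u0' - 1)
            < Real.log (8 * rho0 / (8 * rho0 - 2 * u0' - 1)) := by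
          rcases not_and_or.mp hcon with h | h
          · exact absurd hlt h
          · exact lt_of_not_ge h
        have hx : (0:ℝ) < 8 * rho0 / (8 * rho0 - 2 * u0' - 1) := by
          rw [hD]; positivity
        have h3 : Real.exp (2 * u0' / (8 * rho0 - 2 * u0' - 1))
            < 8 * rho0 / (8 * rho0 - 2 * u0' - 1) :=
          (Real.lt_log_iff_exp_lt hx).mp h2
        have hbne : b ≠ 0 := ne_of_gt hb
        have e4 : 2 * u0' / (8 * rho0 - 2 * u0' - 1) = u0'/b := by
          rw [hD]; field_simp
        rw [e4, hD] at h3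
        have h5 : 2*b*Real.exp (u0'/b) < 8 * rho0 := by
          have h6 := (lt_div_iff₀ (by positivity : (0:ℝ) < 2*b)).mp h3
          linarith
        refine ⟨8 * rho0 - 2*b*Real.exp (u0'/b), by linarith, ?_⟩
        intro t ht
        have := aux_key b u0' t hb
        linarith
      · -- u0' ≥ 0 or b ≤ 0; uniform bound min 1 (8 rho0)
        refine ⟨min 1 (8 * rho0), by positivity, ?_⟩
        intro t ht
        have hexp1 : Real.exp (-t/2) ≤ 1 := by
          rw [Real.exp_le_one_iff]; linarith
        have hexppos : (0:ℝ) < Real.exp (-t/2) := Real.exp_pos _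
        have hA1 : 2*b + 2*u0' = 8*rho0 - 1 := by rw [hbdef]; ring
        have hm1 : min 1 (8*rho0) ≤ 1 := min_le_left _ _
        have hm2 : min 1 (8*rho0) ≤ 8 * rho0 := min_le_right _ _
        have hcase : 0 ≤ u0' ∨ b ≤ 0 := by
          rcases min_le_iff.mp (not_lt.mp hlt) with h | h
          · exact Or.inl h
          · right; rw [hbdef]; linarith
        rcases hcase with hu | hble
        · -- 0 ≤ u0'
          rcases le_or_gt b 0 with hb0 | hb0
          · -- b ≤ 0; since 0 ≤ u0', sign of A varies
            rcases le_total (2*b + 2*u0') 0 with hA | hA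
            · nlinarith [mul_nonpos_of_nonneg_of_nonpos hexppos.le
                (by nlinarith : (2*b + 2*u0') + b*t ≤ 0)]
            · have hstep : (2*b + 2*u0') + b*t ≤ 2*b + 2*u0' := by nlinarith
              have h7 := mul_le_mul_of_nonneg_left hstep hexppos.le
              have h8 := mul_le_mul_of_nonneg_right hexp1 hA
              nlinarith
          · -- 0 ≤ u0', 0 < b : show exp(-t/2)(A + bt) ≤ A
            have hA : (0:ℝ) < 2*b + 2*u0' := by linarith
            have hone : Real.exp (-t/2) * Real.exp (t/2) = 1 := by
              rw [← Real.exp_add]; ring_nf; exact Real.exp_zero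
            have hgeo : 1 + t/2 ≤ Real.exp (t/2) := by
              have := Real.add_one_le_exp (t/2); linarith
            have h8 : (2*b + 2*u0') + b*t ≤ (2*b + 2*u0') * Real.exp (t/2) := by
              nlinarith [mul_nonneg hu ht]
            have h7 : Real.exp (-t/2) * ((2*b + 2*u0') + b*t) ≤ (2*b + 2*u0') := by
              calc Real.exp (-t/2) * ((2*b + 2*u0') + b*t)
                  ≤ Real.exp (-t/2) * ((2*b + 2*u0') * Real.exp (t/2)) :=
                    mul_le_mul_of_nonneg_left h8 hexppos.le
                _ = (2*b + 2*u0') * (Real.exp (-t/2) * Real.exp (t/2)) := by ring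
                _ = (2*b + 2*u0') := by rw [hone, mul_one]
            nlinarith
        · -- b ≤ 0
          rcases le_total (2*b + 2*u0') 0 with hA | hA
          · nlinarith [mul_nonpos_of_nonneg_of_nonpos hexppos.le
              (by nlinarith : (2*b + 2*u0') + b*t ≤ 0)]
          · have hstep : (2*b + 2*u0') + b*t ≤ 2*b + 2*u0' := by nlinarith
            have h7 := mul_le_mul_of_nonneg_left hstep hexppos.le
            have h8 := mul_le_mul_of_nonneg_right hexp1 hA
            nlinarith
    -- contradiction: δ ≤ sInf ≤ 0 < δ
    have hle : δ ≤ sInf ((fun t => 8 * rho0 - (2 * u0' + 4 * (-u0' / 2 - 1 / 4 + 2 * rho0)) * Real.exp (-t / 2)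
      - 2 * (-u0' / 2 - 1 / 4 + 2 * rho0) * t * Real.exp (-t / 2)) '' Set.Ici (0 : ℝ)) := by
      apply le_csInf (hne.image _)
      rintro y ⟨t, ht, rfl⟩
      rw [hgt t]
      exact hδlb t ht
    linarith
  · rintro ⟨h1, h2⟩
    have hb : 0 < b := by
      have := (lt_min_iff.mp h1).2; rw [hbdef]; linarith
    have hu0 : u0' < 0 := (lt_min_iff.mp h1).1
    have hbne : b ≠ 0 := ne_of_gt hb
    have e4 : 2 * u0' / (8 * rho0 - 2 * u0' - 1) = u0'/b := by
      rw [hD]; field_simp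
    have hx : (0:ℝ) < 8 * rho0 / (8 * rho0 - 2 * u0' - 1) := by
      rw [hD]; positivity
    have h3 : 8 * rho0 / (8 * rho0 - 2 * u0' - 1)
        ≤ Real.exp (2 * u0' / (8 * rho0 - 2 * u0' - 1)) :=
      (Real.log_le_iff_le_exp hx).mp h2
    rw [e4, hD] at h3
    have h5 : 8 * rho0 ≤ 2*b*Real.exp (u0'/b) := by
      have := (div_le_iff₀ (by positivity : (0:ℝ) < 2*b)).mp h3
      linarith
    obtain ⟨t0, ht0⟩ : ∃ t0 : ℝ, t0 = -2*u0'/b := ⟨_, rfl⟩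
    have ht0nn : 0 ≤ t0 := by
      rw [ht0]; apply div_nonneg (by linarith) hb.le
    have hb0 : b * t0 = -2*u0' := by rw [ht0]; field_simp
    have hval : (fun t => 8 * rho0 - (2 * u0' + 4 * (-u0' / 2 - 1 / 4 + 2 * rho0)) * Real.exp (-t / 2)
      - 2 * (-u0' / 2 - 1 / 4 + 2 * rho0) * t * Real.exp (-t / 2)) t0
        = 8 * rho0 - 2*b*Real.exp (u0'/b) := by
      rw [hgt t0]
      have he : Real.exp (-t0/2) = Real.exp (u0'/b) := by
        congr 1; rw [ht0]; field_simp
      rw [he]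
      linear_combination (-1) * Real.exp (u0'/b) * hb0
    have hbdd : BddBelow ((fun t => 8 * rho0 - (2 * u0' + 4 * (-u0' / 2 - 1 / 4 + 2 * rho0)) * Real.exp (-t / 2)
      - 2 * (-u0' / 2 - 1 / 4 + 2 * rho0) * t * Real.exp (-t / 2)) '' Set.Ici (0 : ℝ)) := by
      refine ⟨8 * rho0 - 2*b*Real.exp (u0'/b), ?_⟩
      rintro y ⟨t, ht, rfl⟩
      rw [hgt t]
      have := aux_key b u0' t hb
      linarith
    have hmem : (8 * rho0 - 2*b*Real.exp (u0'/b)) ∈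
        ((fun t => 8 * rho0 - (2 * u0' + 4 * (-u0' / 2 - 1 / 4 + 2 * rho0)) * Real.exp (-t / 2)
      - 2 * (-u0' / 2 - 1 / 4 + 2 * rho0) * t * Real.exp (-t / 2)) '' Set.Ici (0 : ℝ)) :=
      ⟨t0, ht0nn, hval⟩
    calc sInf _ ≤ 8 * rho0 - 2*b*Real.exp (u0'/b) := csInf_le hbdd hmem
      _ ≤ 0 := by linarith
end
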